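/- Let 4/3 ≤ r < 2 and fix constants c0,c1,…,c8>0. There exist constants G*, c, C > 0 depending only on r and c0,…,c8 with the following property. Let μ,ν>0, Sc=ν/μ, ε,η>0, κ_η=(η/ν³)^{1/6}, κ_β=(η/μ³)^{1/6}, and let t be a tracer spectrum (2D framework) with shell sums 𝐭, dissipation rate χ and wavenumber κ_θ. Assume hypotheses (i)–(iv) of the first part of Theorem 5.1 hold with constants c1,…,c7 (power-law shell bounds c3χε^{-1/3}κ^{-2/3} ≤ 𝐭_{κ,2κ} ≤ c4χε^{-1/3}κ^{-2/3} on [κg,κf⁻] and c5χη^{-1/3} ≤ 𝐭_{κ,2κ} ≤ c6χη^{-1/3} on [κf⁺,κ_β]; c1κ_η²/ln(κ_η/κf⁺) ≤ η/ε ≤ c2κ_η²/ln(κ_η/κf⁺); 𝐭_{κ0,∞} ≤ c7(𝐭_{κg,κf⁻}+𝐭_{κf⁺,κ_β}); κ0 ≤ κg < κf⁻ ≤ κf⁺ < κ_η, 4κg ≤ κf⁻, 4κf⁺ ≤ κ_β). Assume in addition: κg ≤ c0·κ0; κ_η ≥ 2κf⁺; G ≥ G*; κ_η ≤ c8·κ0·(G·κf⁺/κ0)^{1/4}·(ln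 G)^{1/8}; Sc ≥ 1 and Sc ≥ (G·κf⁺/κ0)^{(3r−4)/(12−6r)}. Then c·κ_β^{r}·κ0^{2−r}/ln(κ_β/κf⁺) ≤ κ_θ² ≤ C·κ_β²/ln(κ_β/κf⁺). (Conclusion (5.9) of Theorem 5.1.) -/

import Mathlib

open Real

/-- Euclidean norm of a lattice vector `k ∈ ℤ^d`. -/
noncomputable def knorm {d : ℕ} (k : Fin d → ℤ) : ℝ :=
  Real.sqrt (∑ i, ((k i : ℝ)) ^ 2)

/-- Shell sum `𝐭_{κ1,κ2}` (finite upper end). -/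
noncomputable def shellSum (d : ℕ) (L κ0 : ℝ) (t : (Fin d → ℤ) → ℝ) (κ1 κ2 : ℝ) : ℝ :=
  L ^ (-(d : ℤ)) * ∑' k : Fin d → ℤ,
    (if κ1 ≤ κ0 * knorm k ∧ κ0 * knorm k < κ2 then t k else 0)

/-- Shell sum `𝐭_{κ1,∞}`. -/
noncomputable def shellSumTop (d : ℕ) (L κ0 : ℝ) (t : (Fin d → ℤ) → ℝ) (κ1 : ℝ) : ℝ :=
  L ^ (-(d : ℤ)) * ∑' k : Fin d → ℤ, (if κ1 ≤ κ0 * knorm k then t k else 0)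

/-- Tracer dissipation rate `χ = μ L^{-d} κ0² Σ_k |k|² t(k)`. -/
noncomputable def chiRate (d : ℕ) (L κ0 μ : ℝ) (t : (Fin d → ℤ) → ℝ) : ℝ :=
  μ * L ^ (-(d : ℤ)) * κ0 ^ 2 * ∑' k : Fin d → ℤ, knorm k ^ 2 * t k

/-- Indicator wavenumber squared, `κ_θ² = κ0² Σ|k|²t(k) / Σ t(k)`. -/
noncomputable def kThetaSq (d : ℕ) (κ0 : ℝ) (t : (Fin d → ℤ) → ℝ) : ℝ :=
  κ0 ^ 2 * (∑' k : Fin d → ℤ, knorm k ^ 2 * t k) / (∑' k : Fin d → ℤ, t k)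

/-- A (discrete) tracer spectrum: nonnegative, vanishing at `k = 0`, not identically
zero, and with `Σ (1+|k|²) t(k) < ∞`. -/
structure IsTracerSpectrum (d : ℕ) (t : (Fin d → ℤ) → ℝ) : Prop where
  nonneg : ∀ k, 0 ≤ t k
  map_zero : t 0 = 0
  exists_ne_zero : ∃ k, t k ≠ 0
  summable : Summable fun k : Fin d → ℤ => (1 + knorm k ^ 2) * t k

namespace TracerAux

lemma knorm_nonneg {d : ℕ} (k : Fin d → ℤ) : 0 ≤ knorm k := Real.sqrt_nonneg _

lemma knorm_zero {d : ℕ} : knorm (0 : Fin d → ℤ) = 0 := by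
  simp [knorm]

lemma one_le_knorm {d : ℕ} {k : Fin d → ℤ} (hk : k ≠ 0) : 1 ≤ knorm k := by
  obtain ⟨i, hi⟩ : ∃ i, k i ≠ 0 := by
    by_contra h; push_neg at h; exact hk (funext h)
  have h1 : (1 : ℝ) ≤ ((k i : ℝ)) ^ 2 := by
    have : (1 : ℤ) ≤ (k i) ^ 2 := by nlinarith [Int.one_le_abs hi, sq_abs (k i)]
    exact_mod_cast this
  have h2 : (1 : ℝ) ≤ ∑ j, ((k j : ℝ)) ^ 2 :=
    h1.trans (Finset.single_le_sum (f := fun j => ((k j : ℝ)) ^ 2)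
      (fun j _ => sq_nonneg _) (Finset.mem_univ i))
  calc (1 : ℝ) = Real.sqrt 1 := (Real.sqrt_one).symm
    _ ≤ knorm k := Real.sqrt_le_sqrt h2

section Shell

variable {d : ℕ} {t : (Fin d → ℤ) → ℝ} (hnn : ∀ k, 0 ≤ t k) (hsum : Summable t)

include hnn hsum in
lemma summable_ind (P : (Fin d → ℤ) → Prop) [DecidablePred P] :
    Summable fun k => if P k then t k else 0 := by
  refine Summable.of_nonneg_of_le (fun k => ?_) (fun k => ?_) hsum <;>
    · by_cases h : P k <;> simp [h, hnn k]

include hnn hsum in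
lemma tsum_ind_le (P Q : (Fin d → ℤ) → Prop) [DecidablePred P] [DecidablePred Q] (hPQ : ∀ k, P k → Q k) :
    (∑' k, if P k then t k else 0) ≤ ∑' k, if Q k then t k else 0 := by
  refine Summable.tsum_le_tsum (fun k => ?_) (summable_ind hnn hsum P) (summable_ind hnn hsum Q)
  by_cases h : P k
  · simp [h, hPQ k h]
  · by_cases h2 : Q k <;> simp [h, h2, hnn k]

variable {L κ0 : ℝ} (hL : 0 < L)

include hnn hsum hL in
lemma shellSum_le_shellSum {κ1 κ2 κ1' κ2' : ℝ}
    (h : ∀ x : ℝ, κ1 ≤ x ∧ x < κ2 → κ1' ≤ x ∧ x < κ2') :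
    shellSum d L κ0 t κ1 κ2 ≤ shellSum d L κ0 t κ1' κ2' := by
  unfold shellSum
  refine mul_le_mul_of_nonneg_left ?_ (le_of_lt (zpow_pos hL _))
  exact tsum_ind_le hnn hsum _ _ (fun k => h (κ0 * knorm k))

include hnn hsum hL in
lemma shellSum_le_shellSumTop {κ1 κ2 κ1' : ℝ} (h : κ1' ≤ κ1) :
    shellSum d L κ0 t κ1 κ2 ≤ shellSumTop d L κ0 t κ1' := by
  unfold shellSum shellSumTop
  refine mul_le_mul_of_nonneg_left ?_ (le_of_lt (zpow_pos hL _))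
  exact tsum_ind_le hnn hsum _ _ (fun k hk => le_trans h hk.1)

include hnn hsum hL in
lemma shellSum_add {κ1 κ2 κ3 : ℝ} (h12 : κ1 ≤ κ2) (h23 : κ2 ≤ κ3) :
    shellSum d L κ0 t κ1 κ3 = shellSum d L κ0 t κ1 κ2 + shellSum d L κ0 t κ2 κ3 := by
  unfold shellSum
  rw [← mul_add, ← Summable.tsum_add (summable_ind hnn hsum _) (summable_ind hnn hsum _)]
  congr 1
  apply tsum_congr
  intro k
  set x := κ0 * knorm k
  by_cases hx : κ2 ≤ x <;> split_ifs <;> simp_all <;> linarith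

lemma shellSum_of_le {κ1 κ2 : ℝ} (h : κ2 ≤ κ1) : shellSum d L κ0 t κ1 κ2 = 0 := by
  unfold shellSum
  have : ∀ k : Fin d → ℤ,
      (if κ1 ≤ κ0 * knorm k ∧ κ0 * knorm k < κ2 then t k else 0) = 0 := by
    intro k; split_ifs with hk
    · exact absurd (lt_of_le_of_lt hk.1 hk.2) (not_lt.2 h)
    · rfl
  simp [this]

include hnn hsum hL in
lemma shellSum_dyadic {κ : ℝ} (hκ : 0 < κ) (n : ℕ) :
    shellSum d L κ0 t κ ((2 : ℝ) ^ n * κ) =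
      ∑ j ∈ Finset.range n, shellSum d L κ0 t ((2 : ℝ) ^ j * κ) ((2 : ℝ) ^ (j + 1) * κ) := by
  induction n with
  | zero => simpa using shellSum_of_le (κ0 := κ0) (t := t) (L := L) (by norm_num)
  | succ n ih =>
      rw [Finset.sum_range_succ, ← ih]
      refine shellSum_add hnn hsum hL ?_ ?_
      · nlinarith [one_le_pow₀ (by norm_num : (1:ℝ) ≤ 2) (n := n)]
      · have h2 : (2 : ℝ) ^ n ≤ 2 ^ (n + 1) :=
          pow_le_pow_right₀ (by norm_num) (Nat.le_succ n)
        nlinarith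

include hnn hL in
lemma shellSumTop_eq (ht0 : t 0 = 0) (hκ0 : 0 < κ0) :
    shellSumTop d L κ0 t κ0 = L ^ (-(d : ℤ)) * ∑' k, t k := by
  unfold shellSumTop
  congr 1
  apply tsum_congr
  intro k
  by_cases hk : k = 0
  · subst hk
    simp [knorm_zero, ht0]
  · have h1 : 1 ≤ knorm k := one_le_knorm hk
    have : κ0 ≤ κ0 * knorm k := le_mul_of_one_le_right hκ0.le h1
    simp [this]

include hnn hsum hL in
lemma shellSum_nonneg (κ1 κ2 : ℝ) : 0 ≤ shellSum d L κ0 t κ1 κ2 := by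
  unfold shellSum
  refine mul_nonneg (le_of_lt (zpow_pos hL _)) (tsum_nonneg fun k => ?_)
  split_ifs <;> simp [hnn k]

end Shell

lemma rpow_le_one_add_mul {x s : ℝ} (hx : 1 ≤ x) (hs0 : 0 ≤ s) (hs1 : s ≤ 1) :
    x ^ s ≤ 1 + s * x := by
  have h := Real.geom_mean_le_arith_mean2_weighted (sub_nonneg.2 hs1) hs0 zero_le_one
    (le_trans zero_le_one hx) (by ring)
  rw [Real.one_rpow] at h
  nlinarith

lemma geom_bound {q : ℝ} (h0 : 0 ≤ q) (h1 : q < 1) (n : ℕ) :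
    ∑ j ∈ Finset.range n, q ^ j ≤ 1 / (1 - q) := by
  rw [geom_sum_eq h1.ne n]
  have hq : q ^ n - 1 ≤ 0 := by nlinarith [pow_le_one₀ h0 h1.le (n := n)]
  have hd : q - 1 < 0 := by linarith
  have hd' : (0:ℝ) < 1 - q := by linarith
  have he : (q ^ n - 1) / (q - 1) = (1 - q ^ n) / (1 - q) := by
    rw [← neg_div_neg_eq]; ring_nf
  rw [he, div_le_div_iff₀ hd' hd']
  nlinarith [pow_nonneg h0 n]

end TracerAux

open TracerAux

set_option maxHeartbeats 1000000 in
/-- Theorem 5.1 (conclusion (5.9)): 2D, large Schmidt number, wide tracer cascade. -/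
theorem tracer_2D_large_Schmidt_wide_cascade
    (r c0 c1 c2 c3 c4 c5 c6 c7 c8 : ℝ)
    (hr1 : 4 / 3 ≤ r) (hr2 : r < 2)
    (hc0 : 0 < c0) (hc1 : 0 < c1) (hc2 : 0 < c2) (hc3 : 0 < c3) (hc4 : 0 < c4)
    (hc5 : 0 < c5) (hc6 : 0 < c6) (hc7 : 0 < c7) (hc8 : 0 < c8) :
    ∃ Gstar c C : ℝ, 0 < Gstar ∧ 0 < c ∧ 0 < C ∧
      ∀ (L μ ν ε η κg κfm κfp κ0 Sc κη κβ χ G : ℝ) (t : (Fin 2 → ℤ) → ℝ),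
        0 < L → 0 < μ → 0 < ν → 0 < ε → 0 < η →
        IsTracerSpectrum 2 t →
        κ0 = 2 * π / L →
        Sc = ν / μ →
        κη = (η / ν ^ 3) ^ (1 / 6 : ℝ) →
        κβ = (η / μ ^ 3) ^ (1 / 6 : ℝ) →
        χ = chiRate 2 L κ0 μ t →
        κ0 ≤ κg → κg < κfm → κfm ≤ κfp → κfp < κη →
        4 * κg ≤ κfm → 4 * κfp ≤ κβ →
        (c1 * κη ^ 2 / Real.log (κη / κfp) ≤ η / ε ∧
          η / ε ≤ c2 * κη ^ 2 / Real.log (κη / κfp)) →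
        (∀ κ, κg ≤ κ → κ ≤ κfm →
          c3 * χ * ε ^ (-1 / 3 : ℝ) * κ ^ (-2 / 3 : ℝ) ≤ shellSum 2 L κ0 t κ (2 * κ) ∧
          shellSum 2 L κ0 t κ (2 * κ) ≤ c4 * χ * ε ^ (-1 / 3 : ℝ) * κ ^ (-2 / 3 : ℝ)) →
        (∀ κ, κfp ≤ κ → κ ≤ κβ →
          c5 * χ * η ^ (-1 / 3 : ℝ) ≤ shellSum 2 L κ0 t κ (2 * κ) ∧
          shellSum 2 L κ0 t κ (2 * κ) ≤ c6 * χ * η ^ (-1 / 3 : ℝ)) →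
        shellSumTop 2 L κ0 t κ0 ≤ c7 * (shellSum 2 L κ0 t κg κfm + shellSum 2 L κ0 t κfp κβ) →
        κg ≤ c0 * κ0 →
        2 * κfp ≤ κη →
        Gstar ≤ G →
        κη ≤ c8 * κ0 * (G * κfp / κ0) ^ (1 / 4 : ℝ) * (Real.log G) ^ (1 / 8 : ℝ) →
        1 ≤ Sc →
        (G * κfp / κ0) ^ ((3 * r - 4) / (12 - 6 * r)) ≤ Sc →
        c * κβ ^ r * κ0 ^ (2 - r) / Real.log (κβ / κfp) ≤ kThetaSq 2 κ0 t ∧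
          kThetaSq 2 κ0 t ≤ C * κβ ^ (2 : ℝ) / Real.log (κβ / κfp) := by
  have hlog2 : (0:ℝ) < Real.log 2 := Real.log_pos (by norm_num)
  have hlog4 : (0:ℝ) < Real.log 4 := Real.log_pos (by norm_num)
  set q : ℝ := (2:ℝ) ^ (-2/3 : ℝ) with hqdef
  have hq0 : 0 < q := Real.rpow_pos_of_pos two_pos _
  have hq1 : q < 1 := Real.rpow_lt_one_of_one_lt_of_neg (by norm_num) (by norm_num)
  set K : ℝ := 1/(1-q) with hKdef
  have hKpos : 0 < K := div_pos one_pos (by linarith)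
  set D1 : ℝ := c4 * K with hD1def
  have hD1 : 0 < D1 := mul_pos hc4 hKpos
  set D2 : ℝ := 3*c6/(2*Real.log 2) with hD2def
  have hD2 : 0 < D2 := div_pos (by linarith) (by linarith)
  set E : ℝ := c7 * D1 * c2 ^ (1/3:ℝ) * (Real.log 2) ^ (-1/3:ℝ) with hEdef
  have hE : 0 < E := by
    have := Real.rpow_pos_of_pos hc2 (1/3:ℝ)
    have := Real.rpow_pos_of_pos hlog2 (-1/3:ℝ)
    positivity
  set Kr : ℝ := 1/Real.log 4 + (2-r)/2 with hKrdef
  have hKr : 0 < Kr := by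
    have : 0 < 1/Real.log 4 := by positivity
    have : 0 < (2-r)/2 := by linarith
    positivity
  have hc8e : 0 < c8 ^ ((r-4/3 : ℝ)) := Real.rpow_pos_of_pos hc8 _
  set cc : ℝ := min (1/(2*(c7*D2))) (1/(2*(E * c8 ^ ((r-4/3 : ℝ)) * Kr))) with hccdef
  have hccpos : 0 < cc := lt_min (by positivity) (by positivity)
  refine ⟨Real.exp 1, cc, 2*Real.log 2/c5, Real.exp_pos 1, hccpos, by positivity, ?_⟩
  intro L μ ν ε η κg κfm κfp κ0 Sc κη κβ χ G t hL hμ hν hε hη ht hκ0def hScdef hκηdef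
    hκβdef hχdef h0g hgfm hfmfp hfpη h4g h4fp hηε hshellI hshellB htop hgc0 h2fp hGstar
    hκηb hSc1 hScb
  have hnn := ht.nonneg
  have hsumt : Summable t :=
    Summable.of_nonneg_of_le (fun k => hnn k)
      (fun k => le_mul_of_one_le_left (hnn k) (by linarith [sq_nonneg (knorm k)]))
      ht.summable
  have hsumsq : Summable fun k : Fin 2 → ℤ => knorm k ^ 2 * t k :=
    Summable.of_nonneg_of_le (fun k => mul_nonneg (sq_nonneg _) (hnn k))
      (fun k => mul_le_mul_of_nonneg_right (by linarith [sq_nonneg (knorm k)]) (hnn k))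
      ht.summable
  have hκ0 : 0 < κ0 := by
    rw [hκ0def]; have := Real.pi_pos; positivity
  have hκg : 0 < κg := lt_of_lt_of_le hκ0 h0g
  have hκfm : 0 < κfm := hκg.trans hgfm
  have hκfp : 0 < κfp := lt_of_lt_of_le hκfm hfmfp
  have hκη : 0 < κη := hκfp.trans hfpη
  have hκβ : 0 < κβ := by linarith
  have hκ0κβ : κ0 ≤ κβ := by linarith
  have hdiv4 : (4:ℝ) ≤ κβ/κfp := (le_div_iff₀ hκfp).2 (by linarith)
  set L' := Real.log (κβ/κfp) with hL'def
  have hL'4 : Real.log 4 ≤ L' := Real.log_le_log (by norm_num) hdiv4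
  have hL'pos : 0 < L' := lt_of_lt_of_le hlog4 hL'4
  set lη := Real.log (κη/κfp) with hlηdef
  have hlη2 : Real.log 2 ≤ lη :=
    Real.log_le_log (by norm_num) ((le_div_iff₀ hκfp).2 (by linarith))
  have hlηpos : 0 < lη := lt_of_lt_of_le hlog2 hlη2
  have hGpos : 0 < G := lt_of_lt_of_le (Real.exp_pos 1) hGstar
  have hlnG : 1 ≤ Real.log G := by
    rw [Real.le_log_iff_exp_le hGpos]; exact hGstar
  obtain ⟨k0, hk0⟩ := ht.exists_ne_zero
  have hk0pos : 0 < t k0 := (hnn k0).lt_of_ne (Ne.symm hk0)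
  have hk0ne : k0 ≠ 0 := by rintro rfl; exact hk0 ht.map_zero
  have hS0 : 0 < ∑' k : Fin 2 → ℤ, t k := Summable.tsum_pos hsumt hnn k0 hk0pos
  have hS2 : 0 < ∑' k : Fin 2 → ℤ, knorm k ^ 2 * t k :=
    Summable.tsum_pos hsumsq (fun k => mul_nonneg (sq_nonneg _) (hnn k)) k0
      (mul_pos (pow_pos (lt_of_lt_of_le zero_lt_one (one_le_knorm hk0ne)) 2) hk0pos)
  have hzL : (0:ℝ) < L ^ (-(2:ℤ)) := zpow_pos hL _
  have hχ : 0 < χ := by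
    rw [hχdef]; unfold chiRate
    push_cast
    exact mul_pos (mul_pos (mul_pos hμ hzL) (by positivity)) hS2
  set SST := shellSumTop 2 L κ0 t κ0 with hSSTdef
  have hSSTeq : SST = L ^ (-(2:ℤ)) * ∑' k : Fin 2 → ℤ, t k := by
    rw [hSSTdef]
    exact_mod_cast shellSumTop_eq hnn hL ht.map_zero hκ0
  have hSST : 0 < SST := by rw [hSSTeq]; exact mul_pos hzL hS0
  have hkθ : kThetaSq 2 κ0 t = χ / (μ * SST) := by
    rw [hSSTeq, hχdef]; unfold kThetaSq chiRate
    push_cast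
    field_simp
  -- identity κβ² μ η^{-1/3} = 1
  have hid : κβ ^ (2:ℝ) * (μ * η ^ (-1/3 : ℝ)) = 1 := by
    have h1 : κβ ^ (2:ℝ) = η ^ (1/3:ℝ) / μ := by
      rw [hκβdef, ← Real.rpow_mul (by positivity)]
      norm_num
      rw [Real.div_rpow hη.le (by positivity)]
      congr 1
      rw [← Real.rpow_natCast μ 3, ← Real.rpow_mul hμ.le]
      norm_num
    rw [h1]
    rw [show (-1/3 : ℝ) = -(1/3:ℝ) by norm_num, Real.rpow_neg hη.le]
    field_simp
  -- dyadic count for the lower bound on SST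
  set lb := Real.logb 2 (κβ/κfp) with hlbdef
  have hlbL : lb = L'/Real.log 2 := by rw [hlbdef, Real.logb, hL'def]
  have hlb2 : (2:ℝ) ≤ lb := by
    rw [hlbdef, Real.le_logb_iff_rpow_le (by norm_num) (by positivity)]
    calc (2:ℝ) ^ (2:ℝ) = 4 := by
          rw [show ((2:ℝ):ℝ) = ((2:ℕ):ℝ) by norm_num, Real.rpow_natCast]; norm_num
      _ ≤ κβ/κfp := hdiv4
  have hlbnn : (0:ℝ) ≤ lb := by linarith
  set n := ⌊lb⌋₊ with hndef
  have hnlb : (n:ℝ) ≤ lb := Nat.floor_le hlbnn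
  have hnge : L'/(2*Real.log 2) ≤ (n:ℝ) := by
    have h1 : lb - 1 < (n:ℝ) := Nat.sub_one_lt_floor lb
    have h2 : L'/(2*Real.log 2) = lb/2 := by rw [hlbL]; ring
    rw [h2]; linarith
  have h2n : (2:ℝ) ^ (n:ℕ) * κfp ≤ κβ := by
    have h1 : (2:ℝ) ^ ((n:ℕ):ℝ) ≤ (2:ℝ) ^ lb :=
      Real.rpow_le_rpow_of_exponent_le one_le_two hnlb
    rw [hlbdef, Real.rpow_logb (by norm_num) (by norm_num) (by positivity)] at h1
    rw [Real.rpow_natCast] at h1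
    exact (le_div_iff₀ hκfp).1 h1
  have hshell_lb : ∀ j ∈ Finset.range n, c5 * χ * η ^ (-1/3:ℝ) ≤
      shellSum 2 L κ0 t ((2:ℝ)^j * κfp) ((2:ℝ)^(j+1) * κfp) := by
    intro j hj
    have hj' : j < n := Finset.mem_range.1 hj
    have h2j : (0:ℝ) < (2:ℝ)^j := pow_pos two_pos j
    have hle : (2:ℝ)^j * κfp ≤ κβ := by
      have h3 : (2:ℝ)^j ≤ (2:ℝ)^(n:ℕ) := pow_le_pow_right₀ one_le_two hj'.le
      have h4 : (2:ℝ)^j * κfp ≤ (2:ℝ)^(n:ℕ) * κfp :=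
        mul_le_mul_of_nonneg_right h3 hκfp.le
      linarith
    have hge : κfp ≤ (2:ℝ)^j * κfp :=
      le_mul_of_one_le_left hκfp.le (one_le_pow₀ one_le_two)
    have h5 := (hshellB ((2:ℝ)^j * κfp) hge hle).1
    rw [show 2 * ((2:ℝ)^j * κfp) = (2:ℝ)^(j+1) * κfp by ring] at h5
    exact_mod_cast h5
  have hSST_lb : c5 * χ * η ^ (-1/3:ℝ) * (L'/(2*Real.log 2)) ≤ SST := by
    have h1 := Finset.sum_le_sum hshell_lb
    rw [Finset.sum_const, Finset.card_range, nsmul_eq_mul] at h1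
    have h2 := shellSum_dyadic hnn hsumt hL hκfp n (κ0 := κ0)
    rw [← h2] at h1
    have h3 : shellSum 2 L κ0 t κfp ((2:ℝ)^n * κfp) ≤ SST := by
      rw [hSSTdef]
      exact shellSum_le_shellSumTop hnn hsumt hL (by linarith)
    have hpos : (0:ℝ) ≤ c5 * χ * η ^ (-1/3:ℝ) := by positivity
    have h4 : c5 * χ * η ^ (-1/3:ℝ) * (L'/(2*Real.log 2)) ≤
        (n:ℝ) * (c5 * χ * η ^ (-1/3:ℝ)) := by
      rw [mul_comm ((n:ℝ)) _]
      exact mul_le_mul_of_nonneg_left hnge hpos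
    linarith
  have hUB : kThetaSq 2 κ0 t ≤ 2*Real.log 2/c5 * κβ ^ (2:ℝ) / L' := by
    rw [hkθ, div_le_div_iff₀ (mul_pos hμ hSST) hL'pos]
    have key : 2*Real.log 2/c5 * κβ ^ (2:ℝ) *
        (μ * (c5 * χ * η ^ (-1/3:ℝ) * (L'/(2*Real.log 2)))) =
        χ * L' * (κβ ^ (2:ℝ) * (μ * η ^ (-1/3:ℝ))) := by
      field_simp
    calc χ * L' = χ * L' * (κβ ^ (2:ℝ) * (μ * η ^ (-1/3:ℝ))) := by rw [hid, mul_one]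
      _ = 2*Real.log 2/c5 * κβ ^ (2:ℝ) *
          (μ * (c5 * χ * η ^ (-1/3:ℝ) * (L'/(2*Real.log 2)))) := key.symm
      _ ≤ 2*Real.log 2/c5 * κβ ^ (2:ℝ) * (μ * SST) := by
        refine mul_le_mul_of_nonneg_left (mul_le_mul_of_nonneg_left hSST_lb hμ.le) ?_
        positivity
  -- B bound: shellSum κfp κβ ≤ D2 χ η' L'
  set m := ⌈lb⌉₊ with hmdef
  have hmlt : (m:ℝ) < lb + 1 := Nat.ceil_lt_add_one hlbnn
  have hlbm : lb ≤ (m:ℝ) := Nat.le_ceil lb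
  have hβ2m : κβ ≤ (2:ℝ)^(m:ℕ) * κfp := by
    have h1 : (2:ℝ) ^ lb ≤ (2:ℝ) ^ ((m:ℕ):ℝ) :=
      Real.rpow_le_rpow_of_exponent_le one_le_two hlbm
    rw [hlbdef, Real.rpow_logb (by norm_num) (by norm_num) (by positivity)] at h1
    rw [Real.rpow_natCast] at h1
    exact (div_le_iff₀ hκfp).1 h1
  have h2lb : (2:ℝ) ^ lb = κβ/κfp := by
    rw [hlbdef]; exact Real.rpow_logb (by norm_num) (by norm_num) (by positivity)
  have hB : shellSum 2 L κ0 t κfp κβ ≤ D2 * χ * η ^ (-1/3:ℝ) * L' := by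
    have hmono : shellSum 2 L κ0 t κfp κβ ≤ shellSum 2 L κ0 t κfp ((2:ℝ)^(m:ℕ) * κfp) :=
      shellSum_le_shellSum hnn hsumt hL
        (fun x hx => ⟨hx.1, lt_of_lt_of_le hx.2 hβ2m⟩)
    rw [shellSum_dyadic hnn hsumt hL hκfp m] at hmono
    have hterm : ∀ j ∈ Finset.range m,
        shellSum 2 L κ0 t ((2:ℝ)^j * κfp) ((2:ℝ)^(j+1) * κfp) ≤ c6 * χ * η ^ (-1/3:ℝ) := by
      intro j hj
      have hj' : j < m := Finset.mem_range.1 hj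
      have hjlb : ((j:ℕ):ℝ) < lb := by
        have : ((j:ℕ):ℝ) + 1 ≤ (m:ℝ) := by exact_mod_cast hj'
        linarith
      have hle : (2:ℝ)^j * κfp ≤ κβ := by
        have h3 : (2:ℝ) ^ ((j:ℕ):ℝ) ≤ (2:ℝ) ^ lb :=
          Real.rpow_le_rpow_of_exponent_le one_le_two hjlb.le
        rw [h2lb, Real.rpow_natCast] at h3
        exact (le_div_iff₀ hκfp).1 h3
      have hge : κfp ≤ (2:ℝ)^j * κfp :=
        le_mul_of_one_le_left hκfp.le (one_le_pow₀ one_le_two)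
      have h5 := (hshellB ((2:ℝ)^j * κfp) hge hle).2
      rw [show 2 * ((2:ℝ)^j * κfp) = (2:ℝ)^(j+1) * κfp by ring] at h5
      exact h5
    have hsum_le := Finset.sum_le_sum hterm
    rw [Finset.sum_const, Finset.card_range, nsmul_eq_mul] at hsum_le
    have hm32 : (m:ℝ) ≤ (3/2) * lb := by linarith
    have hpos : (0:ℝ) ≤ c6 * χ * η ^ (-1/3:ℝ) := by positivity
    have h6 : (m:ℝ) * (c6 * χ * η ^ (-1/3:ℝ)) ≤ (3/2) * lb * (c6 * χ * η ^ (-1/3:ℝ)) :=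
      mul_le_mul_of_nonneg_right hm32 hpos
    have h7 : (3/2) * lb * (c6 * χ * η ^ (-1/3:ℝ)) = D2 * χ * η ^ (-1/3:ℝ) * L' := by
      rw [hlbL, hD2def]
      field_simp
    rw [h7] at h6
    linarith
  -- A bound: shellSum κg κfm ≤ D1 χ ε' κ0^{-2/3}
  set lbg := Real.logb 2 (κfm/κg) with hlbgdef
  have hlbgnn : (0:ℝ) ≤ lbg :=
    Real.logb_nonneg (by norm_num) ((le_div_iff₀ hκg).2 (by linarith))
  set p := ⌈lbg⌉₊ with hpdef
  have hfm2p : κfm ≤ (2:ℝ)^(p:ℕ) * κg := by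
    have h1 : (2:ℝ) ^ lbg ≤ (2:ℝ) ^ ((p:ℕ):ℝ) :=
      Real.rpow_le_rpow_of_exponent_le one_le_two (Nat.le_ceil lbg)
    rw [hlbgdef, Real.rpow_logb (by norm_num) (by norm_num) (by positivity)] at h1
    rw [Real.rpow_natCast] at h1
    exact (div_le_iff₀ hκg).1 h1
  have h2lbg : (2:ℝ) ^ lbg = κfm/κg := by
    rw [hlbgdef]; exact Real.rpow_logb (by norm_num) (by norm_num) (by positivity)
  have hA : shellSum 2 L κ0 t κg κfm ≤ D1 * χ * ε ^ (-1/3:ℝ) * κ0 ^ (-2/3:ℝ) := by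
    have hmono : shellSum 2 L κ0 t κg κfm ≤ shellSum 2 L κ0 t κg ((2:ℝ)^(p:ℕ) * κg) :=
      shellSum_le_shellSum hnn hsumt hL
        (fun x hx => ⟨hx.1, lt_of_lt_of_le hx.2 hfm2p⟩)
    rw [shellSum_dyadic hnn hsumt hL hκg p] at hmono
    have hterm : ∀ j ∈ Finset.range p,
        shellSum 2 L κ0 t ((2:ℝ)^j * κg) ((2:ℝ)^(j+1) * κg) ≤
          (c4 * χ * ε ^ (-1/3:ℝ) * κg ^ (-2/3:ℝ)) * q^j := by
      intro j hj
      have hj' : j < p := Finset.mem_range.1 hj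
      have hjlb : ((j:ℕ):ℝ) < lbg := by
        have h1 : ((j:ℕ):ℝ) + 1 ≤ (p:ℝ) := by exact_mod_cast hj'
        have h2 : (p:ℝ) < lbg + 1 := Nat.ceil_lt_add_one hlbgnn
        linarith
      have hle : (2:ℝ)^j * κg ≤ κfm := by
        have h3 : (2:ℝ) ^ ((j:ℕ):ℝ) ≤ (2:ℝ) ^ lbg :=
          Real.rpow_le_rpow_of_exponent_le one_le_two hjlb.le
        rw [h2lbg, Real.rpow_natCast] at h3
        exact (le_div_iff₀ hκg).1 h3
      have hge : κg ≤ (2:ℝ)^j * κg :=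
        le_mul_of_one_le_left hκg.le (one_le_pow₀ one_le_two)
      have h5 := (hshellI ((2:ℝ)^j * κg) hge hle).2
      rw [show 2 * ((2:ℝ)^j * κg) = (2:ℝ)^(j+1) * κg by ring] at h5
      have hiq : ((2:ℝ)^j * κg) ^ (-2/3:ℝ) = q^j * κg ^ (-2/3:ℝ) := by
        rw [Real.mul_rpow (by positivity) hκg.le]
        congr 1
        rw [← Real.rpow_natCast (2:ℝ) j, ← Real.rpow_mul (by norm_num),
          mul_comm ((j:ℕ):ℝ) (-2/3:ℝ), Real.rpow_mul (by norm_num), Real.rpow_natCast]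
      calc shellSum 2 L κ0 t ((2:ℝ)^j * κg) ((2:ℝ)^(j+1) * κg)
          ≤ c4 * χ * ε ^ (-1/3:ℝ) * (((2:ℝ)^j * κg) ^ (-2/3:ℝ)) := h5
        _ = (c4 * χ * ε ^ (-1/3:ℝ) * κg ^ (-2/3:ℝ)) * q^j := by rw [hiq]; ring
    have hsum_le := Finset.sum_le_sum hterm
    rw [← Finset.mul_sum] at hsum_le
    have hgeom : ∑ j ∈ Finset.range p, q^j ≤ K := by
      rw [hKdef]; exact geom_bound hq0.le hq1 p
    have hconst : (0:ℝ) ≤ c4 * χ * ε ^ (-1/3:ℝ) * κg ^ (-2/3:ℝ) := by positivity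
    have h5 : shellSum 2 L κ0 t κg κfm ≤ (c4 * χ * ε ^ (-1/3:ℝ) * κg ^ (-2/3:ℝ)) * K :=
      le_trans hmono (le_trans hsum_le (mul_le_mul_of_nonneg_left hgeom hconst))
    have h6 : κg ^ (-2/3:ℝ) ≤ κ0 ^ (-2/3:ℝ) :=
      Real.rpow_le_rpow_of_nonpos hκ0 h0g (by norm_num)
    have h7 : (c4 * χ * ε ^ (-1/3:ℝ) * κg ^ (-2/3:ℝ)) * K ≤
        (c4 * χ * ε ^ (-1/3:ℝ) * κ0 ^ (-2/3:ℝ)) * K := by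
      have : (0:ℝ) ≤ c4 * χ * ε ^ (-1/3:ℝ) := by positivity
      have := mul_le_mul_of_nonneg_left h6 this
      exact mul_le_mul_of_nonneg_right this hKpos.le
    have h8 : (c4 * χ * ε ^ (-1/3:ℝ) * κ0 ^ (-2/3:ℝ)) * K =
        D1 * χ * ε ^ (-1/3:ℝ) * κ0 ^ (-2/3:ℝ) := by rw [hD1def]; ring
    linarith
  -- μ η' = κβ^{-2}
  have hκβ2pos : (0:ℝ) < κβ ^ (2:ℝ) := Real.rpow_pos_of_pos hκβ _
  have hμη : μ * η ^ (-1/3:ℝ) = (κβ ^ (2:ℝ))⁻¹ :=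
    (inv_eq_of_mul_eq_one_right hid).symm
  have hW : κβ ^ r * κ0 ^ (2-r) * (μ * η ^ (-1/3:ℝ)) = (κ0/κβ) ^ ((2-r:ℝ)) := by
    rw [hμη]
    have h2 : κβ ^ r * (κβ ^ (2:ℝ))⁻¹ = (κβ ^ ((2-r:ℝ)))⁻¹ := by
      rw [← Real.rpow_neg hκβ.le, ← Real.rpow_add hκβ,
        show r + -(2:ℝ) = -(2-r) by ring, Real.rpow_neg hκβ.le]
    calc κβ ^ r * κ0 ^ (2-r) * (κβ ^ (2:ℝ))⁻¹
        = κ0 ^ (2-r) * (κβ ^ r * (κβ ^ (2:ℝ))⁻¹) := by ring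
      _ = κ0 ^ (2-r) * (κβ ^ ((2-r:ℝ)))⁻¹ := by rw [h2]
      _ = (κ0/κβ) ^ ((2-r:ℝ)) := by
          rw [Real.div_rpow hκ0.le hκβ.le, div_eq_mul_inv]
  have hWle : (κ0/κβ) ^ ((2-r:ℝ)) ≤ 1 :=
    Real.rpow_le_one (by positivity) ((div_le_one hκβ).2 hκ0κβ) (by linarith)
  -- ε lower bound from the η/ε hypothesis
  have hεlb : η * lη / (c2 * κη^2) ≤ ε := by
    have h2 := hηε.2
    rw [div_le_div_iff₀ hε hlηpos] at h2
    rw [div_le_iff₀ (by positivity)]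
    calc η * lη ≤ c2 * κη^2 * ε := h2
      _ = ε * (c2 * κη^2) := by ring
  have hεp : ε ^ (-1/3:ℝ) ≤ (η * lη / (c2 * κη^2)) ^ (-1/3:ℝ) :=
    Real.rpow_le_rpow_of_nonpos (by positivity) hεlb (by norm_num)
  have hXeq : (η * lη / (c2 * κη^2)) ^ (-1/3:ℝ) =
      c2 ^ (1/3:ℝ) * κη ^ (2/3:ℝ) * η ^ (-1/3:ℝ) * lη ^ (-1/3:ℝ) := by
    have e1 : (η * lη / (c2 * κη^2)) ^ (-1/3:ℝ) =
        (η * lη) ^ (-1/3:ℝ) / (c2 * κη^2) ^ (-1/3:ℝ) :=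
      Real.div_rpow (by positivity) (by positivity) _
    have e2 : (η * lη) ^ (-1/3:ℝ) = η ^ (-1/3:ℝ) * lη ^ (-1/3:ℝ) :=
      Real.mul_rpow hη.le hlηpos.le
    have e3 : (c2 * κη^2) ^ (-1/3:ℝ) = ((c2 * κη^2) ^ (1/3:ℝ))⁻¹ := by
      rw [show (-1/3:ℝ) = -(1/3:ℝ) by norm_num, Real.rpow_neg (by positivity)]
    have e4 : (c2 * κη^2) ^ (1/3:ℝ) = c2 ^ (1/3:ℝ) * (κη^2) ^ (1/3:ℝ) :=
      Real.mul_rpow hc2.le (by positivity)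
    have e5 : ((κη:ℝ)^(2:ℕ)) ^ (1/3:ℝ) = κη ^ (2/3:ℝ) := by
      rw [← Real.rpow_natCast κη 2, ← Real.rpow_mul hκη.le]; norm_num
    rw [e1, e2, e3, e4, e5, div_eq_mul_inv, inv_inv]
    ring
  have hlη13 : lη ^ (-1/3:ℝ) ≤ (Real.log 2) ^ (-1/3:ℝ) :=
    Real.rpow_le_rpow_of_nonpos hlog2 hlη2 (by norm_num)
  -- Sc and κβ = Sc^{1/2} κη
  have hScpos : (0:ℝ) < Sc := lt_of_lt_of_le one_pos hSc1
  have hSchalf : κβ = Sc ^ (1/2:ℝ) * κη := by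
    rw [hκβdef, hκηdef, hScdef]
    have h1 : (ν/μ) ^ (1/2:ℝ) = ((ν/μ)^(3:ℕ)) ^ (1/6:ℝ) := by
      rw [← Real.rpow_natCast (ν/μ) 3, ← Real.rpow_mul (by positivity)]; norm_num
    rw [h1, ← Real.mul_rpow (by positivity) (by positivity)]
    congr 1
    field_simp
  set P := G * κfp / κ0 with hPdef
  have hPpos : 0 < P := by rw [hPdef]; positivity
  have hPG : G ≤ P := by
    rw [hPdef, le_div_iff₀ hκ0]
    have h1 : κ0 ≤ κfp := by linarith
    exact mul_le_mul_of_nonneg_left h1 hGpos.le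
  set b := (3*r-4)/(12-6*r) with hbdef
  have h12r : (0:ℝ) < 12 - 6*r := by linarith
  have hb0 : 0 ≤ b := div_nonneg (by linarith) (by linarith)
  have hYb1 : Sc ^ (((r-2)/2 : ℝ)) ≤ P ^ ((-(3*r-4)/12 : ℝ)) := by
    have h1 : Sc ^ ((r-2)/2:ℝ) ≤ (P ^ b) ^ ((r-2)/2:ℝ) :=
      Real.rpow_le_rpow_of_nonpos (Real.rpow_pos_of_pos hPpos b) hScb (by linarith)
    rwa [← Real.rpow_mul hPpos.le,
      show b*((r-2)/2) = -(3*r-4)/12 by rw [hbdef, div_mul_div_comm, div_eq_div_iff (mul_pos h12r two_pos).ne' (by norm_num)]; ring] at h1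
  have hlnG0 : (0:ℝ) ≤ Real.log G := by linarith
  have hκηκ0 : κη/κ0 ≤ c8 * P ^ (1/4:ℝ) * (Real.log G) ^ (1/8:ℝ) := by
    rw [div_le_iff₀ hκ0]
    calc κη ≤ c8 * κ0 * P ^ (1/4:ℝ) * (Real.log G) ^ (1/8:ℝ) := hκηb
      _ = c8 * P ^ (1/4:ℝ) * (Real.log G) ^ (1/8:ℝ) * κ0 := by ring
  have hY2 : (κη/κ0) ^ ((r-4/3:ℝ)) ≤
      c8 ^ ((r-4/3:ℝ)) * (P ^ ((r-4/3)/4:ℝ)) * ((Real.log G) ^ ((r-4/3)/8:ℝ)) := by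
    have h1 : (κη/κ0) ^ ((r-4/3:ℝ)) ≤
        (c8 * P ^ (1/4:ℝ) * (Real.log G) ^ (1/8:ℝ)) ^ ((r-4/3:ℝ)) :=
      Real.rpow_le_rpow (by positivity) hκηκ0 (by linarith)
    have h2 : (c8 * P ^ (1/4:ℝ) * (Real.log G) ^ (1/8:ℝ)) ^ ((r-4/3:ℝ)) =
        c8 ^ ((r-4/3:ℝ)) * (P ^ ((r-4/3)/4:ℝ)) * ((Real.log G) ^ ((r-4/3)/8:ℝ)) := by
      rw [Real.mul_rpow (by positivity) (by positivity),
        Real.mul_rpow (by positivity) (by positivity),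
        ← Real.rpow_mul hPpos.le, ← Real.rpow_mul hlnG0,
        show (1/4:ℝ)*(r-4/3) = (r-4/3)/4 by ring,
        show (1/8:ℝ)*(r-4/3) = (r-4/3)/8 by ring]
    rw [h2] at h1
    exact h1
  have hs0 : (0:ℝ) ≤ (r-4/3)/8 := by linarith
  have hlnGb : (Real.log G) ^ ((r-4/3)/8:ℝ) ≤ Kr * L' := by
    have h1 : (Real.log G) ^ ((r-4/3)/8:ℝ) ≤ 1 + ((r-4/3)/8)*Real.log G :=
      rpow_le_one_add_mul hlnG hs0 (by linarith)
    have h2' : (1:ℝ) ≤ L'/Real.log 4 := (one_le_div hlog4).2 hL'4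
    have hlnP : Real.log G ≤ Real.log P := Real.log_le_log hGpos hPG
    have hlnSc : b*Real.log G ≤ Real.log Sc := by
      have h3 : Real.log (P ^ b) ≤ Real.log Sc :=
        Real.log_le_log (Real.rpow_pos_of_pos hPpos b) hScb
      rw [Real.log_rpow hPpos] at h3
      calc b*Real.log G ≤ b*Real.log P := mul_le_mul_of_nonneg_left hlnP hb0
        _ ≤ Real.log Sc := h3
    have hlnSc2 : Real.log Sc ≤ 2*L' := by
      have h4 : Sc ^ (1/2:ℝ) * κfp ≤ κβ := by
        rw [hSchalf]
        exact mul_le_mul_of_nonneg_left (by linarith) (Real.rpow_pos_of_pos hScpos _).le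
      have h5 : Real.log (Sc ^ (1/2:ℝ)) ≤ L' :=
        Real.log_le_log (Real.rpow_pos_of_pos hScpos _) ((le_div_iff₀ hκfp).2 h4)
      rw [Real.log_rpow hScpos] at h5
      linarith
    have hsb : ((r-4/3)/8)*Real.log G ≤ ((2-r)/4)*Real.log Sc := by
      have key : ((r-4/3)/8 : ℝ) = ((2-r)/4)*b := by rw [hbdef, div_mul_div_comm, eq_div_iff (mul_ne_zero four_ne_zero h12r.ne')]; ring
      calc ((r-4/3)/8)*Real.log G = ((2-r)/4)*(b*Real.log G) := by rw [key]; ring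
        _ ≤ ((2-r)/4)*Real.log Sc := mul_le_mul_of_nonneg_left hlnSc (by linarith)
    have h6 : ((2-r)/4)*Real.log Sc ≤ ((2-r)/4)*(2*L') :=
      mul_le_mul_of_nonneg_left hlnSc2 (by linarith)
    have h8 : ((2-r)/4)*(2*L') = ((2-r)/2)*L' := by ring
    have h9 : Kr*L' = L'/Real.log 4 * 1 + ((2-r)/2)*L' := by rw [hKrdef]; field_simp
    rw [h9]
    have h10 : L'/Real.log 4 * 1 = L'/Real.log 4 := by ring
    linarith
  have hYeq : κβ ^ r * (κβ ^ (2:ℝ))⁻¹ * κη ^ (2/3:ℝ) * κ0 ^ ((4:ℝ)/3-r) =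
      Sc ^ (((r-2)/2:ℝ)) * (κη/κ0) ^ ((r-4/3:ℝ)) := by
    have a1 : κβ ^ r * (κβ ^ (2:ℝ))⁻¹ = κβ ^ ((r-2:ℝ)) := by
      rw [← Real.rpow_neg hκβ.le, ← Real.rpow_add hκβ,
        show r + -(2:ℝ) = r - 2 by ring]
    have a2 : κβ ^ ((r-2:ℝ)) = Sc ^ (((r-2)/2:ℝ)) * κη ^ ((r-2:ℝ)) := by
      rw [hSchalf, Real.mul_rpow (Real.rpow_pos_of_pos hScpos _).le hκη.le,
        ← Real.rpow_mul hScpos.le, show (1/2:ℝ)*(r-2) = (r-2)/2 by ring]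
    have a3 : κη ^ ((r-2:ℝ)) * κη ^ (2/3:ℝ) = κη ^ ((r-4/3:ℝ)) := by
      rw [← Real.rpow_add hκη]; congr 1; ring
    have a4 : κη ^ ((r-4/3:ℝ)) * κ0 ^ ((4:ℝ)/3-r) = (κη/κ0) ^ ((r-4/3:ℝ)) := by
      rw [Real.div_rpow hκη.le hκ0.le,
        show (4:ℝ)/3-r = -(r-4/3) by ring, Real.rpow_neg hκ0.le]
      exact (div_eq_mul_inv _ _).symm
    calc κβ ^ r * (κβ ^ (2:ℝ))⁻¹ * κη ^ (2/3:ℝ) * κ0 ^ ((4:ℝ)/3-r)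
        = Sc ^ (((r-2)/2:ℝ)) * (κη ^ ((r-2:ℝ)) * κη ^ (2/3:ℝ) * κ0 ^ ((4:ℝ)/3-r)) := by
          rw [a1, a2]; ring
      _ = Sc ^ (((r-2)/2:ℝ)) * (κη ^ ((r-4/3:ℝ)) * κ0 ^ ((4:ℝ)/3-r)) := by rw [a3]
      _ = Sc ^ (((r-2)/2:ℝ)) * (κη/κ0) ^ ((r-4/3:ℝ)) := by rw [a4]
  have hYle : Sc ^ (((r-2)/2:ℝ)) * (κη/κ0) ^ ((r-4/3:ℝ)) ≤
      c8 ^ ((r-4/3:ℝ)) * (Kr*L') := by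
    have h1 : Sc ^ (((r-2)/2:ℝ)) * (κη/κ0) ^ ((r-4/3:ℝ)) ≤
        P ^ ((-(3*r-4)/12:ℝ)) *
          (c8 ^ ((r-4/3:ℝ)) * (P ^ ((r-4/3)/4:ℝ)) * ((Real.log G) ^ ((r-4/3)/8:ℝ))) :=
      mul_le_mul hYb1 hY2 (by positivity) (by positivity)
    have h2 : P ^ ((-(3*r-4)/12:ℝ)) * (P ^ ((r-4/3)/4:ℝ)) = 1 := by
      rw [← Real.rpow_add hPpos, show (-(3*r-4)/12 + (r-4/3)/4 : ℝ) = 0 by ring,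
        Real.rpow_zero]
    calc Sc ^ (((r-2)/2:ℝ)) * (κη/κ0) ^ ((r-4/3:ℝ))
        ≤ P ^ ((-(3*r-4)/12:ℝ)) *
          (c8 ^ ((r-4/3:ℝ)) * (P ^ ((r-4/3)/4:ℝ)) * ((Real.log G) ^ ((r-4/3)/8:ℝ))) := h1
      _ = c8 ^ ((r-4/3:ℝ)) * ((Real.log G) ^ ((r-4/3)/8:ℝ)) *
          (P ^ ((-(3*r-4)/12:ℝ)) * (P ^ ((r-4/3)/4:ℝ))) := by ring
      _ = c8 ^ ((r-4/3:ℝ)) * ((Real.log G) ^ ((r-4/3)/8:ℝ)) := by rw [h2, mul_one]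
      _ ≤ c8 ^ ((r-4/3:ℝ)) * (Kr*L') := mul_le_mul_of_nonneg_left hlnGb hc8e.le
  -- combine SST upper bound
  set R := c7*(D1*ε ^ (-1/3:ℝ)*κ0 ^ (-2/3:ℝ) + D2*η ^ (-1/3:ℝ)*L') with hRdef
  have hεppos : (0:ℝ) < ε ^ (-1/3:ℝ) := Real.rpow_pos_of_pos hε _
  have hηppos : (0:ℝ) < η ^ (-1/3:ℝ) := Real.rpow_pos_of_pos hη _
  have hκ0mpos : (0:ℝ) < κ0 ^ (-2/3:ℝ) := Real.rpow_pos_of_pos hκ0 _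
  have hRpos : 0 < R := by rw [hRdef]; positivity
  have hSST_ub : SST ≤ χ * R := by
    calc SST ≤ c7*(shellSum 2 L κ0 t κg κfm + shellSum 2 L κ0 t κfp κβ) := htop
      _ ≤ c7*((D1*χ*ε ^ (-1/3:ℝ)*κ0 ^ (-2/3:ℝ)) + (D2*χ*η ^ (-1/3:ℝ)*L')) :=
          mul_le_mul_of_nonneg_left (add_le_add hA hB) hc7.le
      _ = χ * R := by rw [hRdef]; ring
  have hLB1 : 1/(μ*R) ≤ kThetaSq 2 κ0 t := by
    rw [hkθ, div_le_div_iff₀ (by positivity) (mul_pos hμ hSST)]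
    calc 1*(μ*SST) = μ*SST := one_mul _
      _ ≤ μ*(χ*R) := mul_le_mul_of_nonneg_left hSST_ub hμ.le
      _ = χ*(μ*R) := by ring
  refine ⟨le_trans ?_ hLB1, hUB⟩
  rw [div_le_div_iff₀ hL'pos (by positivity), one_mul]
  have hsplit : cc*κβ ^ r*κ0 ^ (2-r)*(μ*R) =
      cc*c7*D1*(κβ ^ r*(κ0 ^ (2-r)*κ0 ^ (-2/3:ℝ))*μ*ε ^ (-1/3:ℝ)) +
      cc*c7*D2*((κβ ^ r*κ0 ^ (2-r)*(μ*η ^ (-1/3:ℝ)))*L') := by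
    rw [hRdef]; ring
  rw [hsplit]
  have hT2 : cc*c7*D2*((κβ ^ r*κ0 ^ (2-r)*(μ*η ^ (-1/3:ℝ)))*L') ≤ L'/2 := by
    rw [hW]
    have h2 : cc*(c7*D2) ≤ 1/2 := by
      have h3 : cc ≤ 1/(2*(c7*D2)) := min_le_left _ _
      have h4 := mul_le_mul_of_nonneg_right h3 (by positivity : (0:ℝ) ≤ c7*D2)
      have h5 : (1/(2*(c7*D2)))*(c7*D2) = 1/2 := by field_simp
      rw [h5] at h4
      exact h4
    calc cc*c7*D2*((κ0/κβ) ^ ((2-r:ℝ))*L') ≤ cc*c7*D2*(1*L') := by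
          refine mul_le_mul_of_nonneg_left
            (mul_le_mul_of_nonneg_right hWle hL'pos.le) (by positivity)
      _ = (cc*(c7*D2))*L' := by ring
      _ ≤ (1/2)*L' := mul_le_mul_of_nonneg_right h2 hL'pos.le
      _ = L'/2 := by ring
  have hT1 : cc*c7*D1*(κβ ^ r*(κ0 ^ (2-r)*κ0 ^ (-2/3:ℝ))*μ*ε ^ (-1/3:ℝ)) ≤ L'/2 := by
    have hκ043 : κ0 ^ (2-r)*κ0 ^ (-2/3:ℝ) = κ0 ^ ((4:ℝ)/3-r) := by
      rw [← Real.rpow_add hκ0]; congr 1; ring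
    rw [hκ043]
    have hκ043pos : (0:ℝ) < κ0 ^ ((4:ℝ)/3-r) := Real.rpow_pos_of_pos hκ0 _
    have hκβr : (0:ℝ) < κβ ^ r := Real.rpow_pos_of_pos hκβ _
    have step1 : κβ ^ r*κ0 ^ ((4:ℝ)/3-r)*μ*ε ^ (-1/3:ℝ) ≤
        κβ ^ r*κ0 ^ ((4:ℝ)/3-r)*μ*(c2 ^ (1/3:ℝ)*κη ^ (2/3:ℝ)*η ^ (-1/3:ℝ)*lη ^ (-1/3:ℝ)) := by
      rw [mul_assoc, mul_assoc, mul_assoc, mul_assoc]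
      refine mul_le_mul_of_nonneg_left ?_ hκβr.le
      refine mul_le_mul_of_nonneg_left ?_ hκ043pos.le
      refine mul_le_mul_of_nonneg_left ?_ hμ.le
      rw [← hXeq]
      exact hεp
    have step2 : κβ ^ r*κ0 ^ ((4:ℝ)/3-r)*μ*(c2 ^ (1/3:ℝ)*κη ^ (2/3:ℝ)*η ^ (-1/3:ℝ)*lη ^ (-1/3:ℝ)) =
        c2 ^ (1/3:ℝ)*lη ^ (-1/3:ℝ)*(κβ ^ r*(κβ ^ (2:ℝ))⁻¹*κη ^ (2/3:ℝ)*κ0 ^ ((4:ℝ)/3-r)) := by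
      rw [show κβ ^ r*κ0 ^ ((4:ℝ)/3-r)*μ*(c2 ^ (1/3:ℝ)*κη ^ (2/3:ℝ)*η ^ (-1/3:ℝ)*lη ^ (-1/3:ℝ)) =
        c2 ^ (1/3:ℝ)*lη ^ (-1/3:ℝ)*(κβ ^ r*(μ*η ^ (-1/3:ℝ))*κη ^ (2/3:ℝ)*κ0 ^ ((4:ℝ)/3-r)) by ring,
        hμη]
    have step3 : c2 ^ (1/3:ℝ)*lη ^ (-1/3:ℝ)*(κβ ^ r*(κβ ^ (2:ℝ))⁻¹*κη ^ (2/3:ℝ)*κ0 ^ ((4:ℝ)/3-r)) ≤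
        c2 ^ (1/3:ℝ)*(Real.log 2) ^ (-1/3:ℝ)*(c8 ^ ((r-4/3:ℝ))*(Kr*L')) := by
      have hYle' : κβ ^ r*(κβ ^ (2:ℝ))⁻¹*κη ^ (2/3:ℝ)*κ0 ^ ((4:ℝ)/3-r) ≤
          c8 ^ ((r-4/3:ℝ))*(Kr*L') := by
        rw [hYeq]; exact hYle
      refine mul_le_mul (mul_le_mul_of_nonneg_left hlη13 (by positivity))
        hYle' (by positivity) (by positivity)
    have hccE : cc*c7*D1*(c2 ^ (1/3:ℝ)*(Real.log 2) ^ (-1/3:ℝ)*(c8 ^ ((r-4/3:ℝ))*(Kr*L'))) ≤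
        L'/2 := by
      have h3 : cc ≤ 1/(2*(E*c8 ^ ((r-4/3:ℝ))*Kr)) := min_le_right _ _
      have hpos : (0:ℝ) < E*c8 ^ ((r-4/3:ℝ))*Kr := by positivity
      have h4 : cc*(E*c8 ^ ((r-4/3:ℝ))*Kr) ≤ 1/2 := by
        have h5 := mul_le_mul_of_nonneg_right h3 hpos.le
        have h6 : (1/(2*(E*c8 ^ ((r-4/3:ℝ))*Kr)))*(E*c8 ^ ((r-4/3:ℝ))*Kr) = 1/2 := by
          field_simp
        rw [h6] at h5
        exact h5
      have h7 : cc*c7*D1*(c2 ^ (1/3:ℝ)*(Real.log 2) ^ (-1/3:ℝ)*(c8 ^ ((r-4/3:ℝ))*(Kr*L'))) =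
          (cc*(E*c8 ^ ((r-4/3:ℝ))*Kr))*L' := by rw [hEdef]; ring
      rw [h7]
      calc (cc*(E*c8 ^ ((r-4/3:ℝ))*Kr))*L' ≤ (1/2)*L' :=
            mul_le_mul_of_nonneg_right h4 hL'pos.le
        _ = L'/2 := by ring
    calc cc*c7*D1*(κβ ^ r*κ0 ^ ((4:ℝ)/3-r)*μ*ε ^ (-1/3:ℝ))
        ≤ cc*c7*D1*(κβ ^ r*κ0 ^ ((4:ℝ)/3-r)*μ*
            (c2 ^ (1/3:ℝ)*κη ^ (2/3:ℝ)*η ^ (-1/3:ℝ)*lη ^ (-1/3:ℝ))) :=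
          mul_le_mul_of_nonneg_left step1 (by positivity)
      _ = cc*c7*D1*(c2 ^ (1/3:ℝ)*lη ^ (-1/3:ℝ)*
            (κβ ^ r*(κβ ^ (2:ℝ))⁻¹*κη ^ (2/3:ℝ)*κ0 ^ ((4:ℝ)/3-r))) := by rw [step2]
      _ ≤ cc*c7*D1*(c2 ^ (1/3:ℝ)*(Real.log 2) ^ (-1/3:ℝ)*(c8 ^ ((r-4/3:ℝ))*(Kr*L'))) :=
          mul_le_mul_of_nonneg_left step3 (by positivity)
      _ ≤ L'/2 := hccE
  linarith
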